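/- Let s, t ∈ ℕ^m, let P ∈ K[X]^{m×m} be nonsingular and s-reduced with d = rdeg_s(P), and let R be an (s+t)-reduced form of P. Then the sum of the (s+t)-row degrees of R equals (Σ_i d_i) + (Σ_i t_i). -/

import Mathlib

open Polynomial Matrix

/-- The `s`-row degree of row `i` of `P`. -/
noncomputable def rowDegW {K : Type*} [Field K] {k m : ℕ} (s : Fin m → ℕ)
    (P : Matrix (Fin k) (Fin m) (Polynomial K)) (i : Fin k) : WithBot ℕ :=
  Finset.univ.sup fun j => (P i j).degree + (s j : WithBot ℕ)

/-- The `s`-leading matrix of `P`. -/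
noncomputable def leadMat {K : Type*} [Field K] {k m : ℕ} (s : Fin m → ℕ)
    (P : Matrix (Fin k) (Fin m) (Polynomial K)) : Matrix (Fin k) (Fin m) K :=
  fun i j =>
    if (P i j).degree + (s j : WithBot ℕ) = rowDegW s P i then (P i j).leadingCoeff else 0

/-- `P` is `s`-reduced. -/
def IsReducedS {K : Type*} [Field K] {k m : ℕ} (s : Fin m → ℕ)
    (P : Matrix (Fin k) (Fin m) (Polynomial K)) : Prop :=
  (leadMat s P).rank = k

/-- A general product-coefficient lemma. -/
lemma coeff_prod_aux {K : Type*} [Field K] {ι : Type*} (s : Finset ι)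
    (f : ι → Polynomial K) (n : ι → ℕ) (h : ∀ i ∈ s, (f i).natDegree ≤ n i) :
    (∏ i ∈ s, f i).coeff (∑ i ∈ s, n i) = ∏ i ∈ s, (f i).coeff (n i) := by
  induction s using Finset.cons_induction with
  | empty => simp
  | cons a s ha ih =>
    rw [Finset.prod_cons, Finset.sum_cons, Finset.prod_cons,
      coeff_mul_add_eq_of_natDegree_le (h a (Finset.mem_cons_self a s))
        (le_trans (Polynomial.natDegree_prod_le s f)
          (Finset.sum_le_sum fun i hi => h i (Finset.mem_cons_of_mem hi))),
      ih fun i hi => h i (Finset.mem_cons_of_mem hi)]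

/-- Full rank square matrix over a field has nonzero determinant. -/
lemma det_ne_zero_of_rank_eq {K : Type*} [Field K] {m : ℕ}
    (A : Matrix (Fin m) (Fin m) K) (h : A.rank = m) : A.det ≠ 0 := by
  intro hdet
  obtain ⟨v, hv0, hv⟩ := Matrix.exists_mulVec_eq_zero_iff.mpr hdet
  have hker : v ∈ LinearMap.ker A.mulVecLin := by
    simp [Matrix.mulVecLin, hv]
  have hkerpos : 0 < Module.finrank K (LinearMap.ker A.mulVecLin) := by
    rw [Module.finrank_pos_iff]
    exact ⟨⟨⟨v, hker⟩, 0, by simpa using hv0⟩⟩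
  have hrn := LinearMap.finrank_range_add_finrank_ker A.mulVecLin
  have : A.rank = Module.finrank K (LinearMap.range A.mulVecLin) := rfl
  rw [← this] at hrn
  simp only [Module.finrank_pi, Fintype.card_fin] at hrn
  omega

set_option maxHeartbeats 1600000 in
/-- Key lemma: for a `u`-reduced matrix, the sum of `u`-row degrees equals
`deg det A + Σ u`. -/
lemma key_deg {K : Type*} [Field K] {m : ℕ} (u : Fin m → ℕ)
    (A : Matrix (Fin m) (Fin m) (Polynomial K))
    (hrk : (leadMat u A).rank = m)
    (e : Fin m → ℕ) (he : ∀ i, rowDegW u A i = (e i : WithBot ℕ)) :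
    (A.det).degree + ((∑ i, u i : ℕ) : WithBot ℕ) = ((∑ i, e i : ℕ) : WithBot ℕ) := by
  set B : Matrix (Fin m) (Fin m) (Polynomial K) :=
    Matrix.of fun i j => A i j * X ^ (u j) with hB
  have hdetB : B.det = A.det * X ^ (∑ i, u i) := by
    have : B = A * Matrix.diagonal (fun j => (X : Polynomial K) ^ (u j)) := by
      ext i j
      simp [hB, Matrix.mul_diagonal]
    rw [this, Matrix.det_mul, Matrix.det_diagonal, Finset.prod_pow_eq_pow_sum]
  have hdegB : ∀ i j, (B i j).degree ≤ (e i : WithBot ℕ) := by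
    intro i j
    have h1 : (B i j).degree = (A i j).degree + (u j : WithBot ℕ) := by
      simp [hB, degree_mul, degree_X_pow]
    rw [h1, ← he i]
    exact Finset.le_sup (f := fun j => (A i j).degree + (u j : WithBot ℕ))
      (Finset.mem_univ j)
  have hndB : ∀ i j, (B i j).natDegree ≤ e i := fun i j =>
    Polynomial.natDegree_le_iff_degree_le.mpr (hdegB i j)
  have hcoe : ∀ i j, (B i j).coeff (e i) = leadMat u A i j := by
    intro i j
    rw [leadMat, he i]
    split_ifs with h
    · have hA0 : A i j ≠ 0 := by
        intro h0
        rw [h0, degree_zero, WithBot.bot_add] at h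
        exact absurd h.symm (by simp)
      have hdeg : (B i j).degree = ((e i : ℕ) : WithBot ℕ) := by
        rw [show (B i j).degree = (A i j).degree + (u j : WithBot ℕ) by
          simp [hB, degree_mul, degree_X_pow], h]
      have hnd : (B i j).natDegree = e i := natDegree_eq_of_degree_eq_some hdeg
      rw [← hnd, Polynomial.coeff_natDegree]
      simp [hB, leadingCoeff_mul, leadingCoeff_X_pow]
    · apply Polynomial.coeff_eq_zero_of_degree_lt
      refine lt_of_le_of_ne (hdegB i j) ?_
      rw [show (B i j).degree = (A i j).degree + (u j : WithBot ℕ) by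
        simp [hB, degree_mul, degree_X_pow]]
      exact h
  have hcoeffdet : (B.det).coeff (∑ i, e i) = (leadMat u A).det := by
    rw [Matrix.det_apply, Matrix.det_apply, Polynomial.finset_sum_coeff]
    refine Finset.sum_congr rfl fun σ _ => ?_
    rw [Polynomial.coeff_smul]
    congr 1
    rw [← Equiv.sum_comp σ e]
    rw [coeff_prod_aux Finset.univ (fun i => B (σ i) i) (fun i => e (σ i))
      (fun i _ => hndB (σ i) i)]
    exact Finset.prod_congr rfl fun i _ => hcoe (σ i) i
  have hldne : (leadMat u A).det ≠ 0 := det_ne_zero_of_rank_eq _ hrk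
  have hdegdet : (B.det).degree = ((∑ i, e i : ℕ) : WithBot ℕ) := by
    refine le_antisymm ?_ (Polynomial.le_degree_of_ne_zero (hcoeffdet ▸ hldne))
    rw [Matrix.det_apply]
    refine le_trans (Polynomial.degree_sum_le _ _) (Finset.sup_le fun σ _ => ?_)
    have hs : ((Equiv.Perm.sign σ : ℤˣ) • ∏ i, B (σ i) i).degree
        = (∏ i, B (σ i) i).degree := by
      rcases Int.units_eq_one_or (Equiv.Perm.sign σ) with h | h <;>
        rw [h] <;> simp
    rw [hs]
    refine le_trans (Polynomial.degree_prod_le _ _) ?_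
    calc ∑ i, (B (σ i) i).degree ≤ ∑ i, ((e (σ i) : ℕ) : WithBot ℕ) :=
          Finset.sum_le_sum fun i _ => hdegB (σ i) i
      _ = ((∑ i, e (σ i) : ℕ) : WithBot ℕ) := by rw [Nat.cast_sum]
      _ = ((∑ i, e i : ℕ) : WithBot ℕ) := by rw [Equiv.sum_comp σ e]
  rw [hdetB, degree_mul, degree_X_pow] at hdegdet
  exact hdegdet

/-- if `P` is nonsingular and `s`-reduced with `d = rdeg_s(P)`, and `R`
is an `(s+t)`-reduced form of `P`, then the sum of the `(s+t)`-row degrees of `R`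
equals `(Σ d_i) + (Σ t_i)`. -/
theorem sum_shifted_rowDeg_reduced_form
    {K : Type*} [Field K] {m : ℕ} (s t : Fin m → ℕ)
    (P : Matrix (Fin m) (Fin m) (Polynomial K))
    (hPns : P.det ≠ 0) (hPred : IsReducedS s P)
    (d : Fin m → ℕ) (hd : ∀ i, rowDegW s P i = (d i : WithBot ℕ))
    (R : Matrix (Fin m) (Fin m) (Polynomial K))
    (hequiv : ∃ U : Matrix (Fin m) (Fin m) (Polynomial K), IsUnit U ∧ R = U * P)
    (hRred : IsReducedS (fun i => s i + t i) R) :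
    ∑ i, rowDegW (fun i => s i + t i) R i = (((∑ i, d i) + ∑ i, t i : ℕ) : WithBot ℕ) := by
  obtain ⟨U, hU, rfl⟩ := hequiv
  have hUdet : IsUnit U.det := (Matrix.isUnit_iff_isUnit_det U).mp hU
  have hUdeg : U.det.degree = 0 := Polynomial.degree_eq_zero_of_isUnit hUdet
  have hRdet : (U * P).det ≠ 0 := by
    rw [Matrix.det_mul]
    exact mul_ne_zero hUdet.ne_zero hPns
  -- row degrees of R are not ⊥
  have hnb : ∀ i, rowDegW (fun i => s i + t i) (U * P) i ≠ ⊥ := by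
    intro i hbot
    rw [rowDegW, Finset.sup_eq_bot_iff] at hbot
    apply hRdet
    apply Matrix.det_eq_zero_of_row_eq_zero i
    intro j
    have := hbot j (Finset.mem_univ j)
    rcases WithBot.add_eq_bot.mp this with h | h
    · exact Polynomial.degree_eq_bot.mp h
    · exact absurd h (WithBot.coe_ne_bot)
  set e : Fin m → ℕ := fun i => (rowDegW (fun i => s i + t i) (U * P) i).unbot (hnb i)
    with hedef
  have he : ∀ i, rowDegW (fun i => s i + t i) (U * P) i = (e i : WithBot ℕ) := by
    intro i
    simp [hedef, Nat.cast_withBot]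
  have h1 := key_deg s P hPred d hd
  have h2 := key_deg (fun i => s i + t i) (U * P) hRred e he
  -- degree of det R = degree of det P
  have hdet : (U * P).det.degree = P.det.degree := by
    rw [Matrix.det_mul, degree_mul, hUdeg, zero_add]
  rw [hdet] at h2
  -- turn everything into ℕ
  obtain ⟨n, hn⟩ : ∃ n : ℕ, P.det.degree = (n : WithBot ℕ) :=
    ⟨P.det.natDegree, Polynomial.degree_eq_natDegree hPns⟩
  rw [hn] at h1 h2
  have h1' : n + ∑ i, s i = ∑ i, d i := by
    exact_mod_cast h1
  have h2' : n + ∑ i, (s i + t i) = ∑ i, e i := by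
    exact_mod_cast h2
  rw [Finset.sum_add_distrib] at h2'
  have hsum : ∑ i, e i = (∑ i, d i) + ∑ i, t i := by omega
  calc ∑ i, rowDegW (fun i => s i + t i) (U * P) i
      = ∑ i, ((e i : ℕ) : WithBot ℕ) := Finset.sum_congr rfl fun i _ => he i
    _ = ((∑ i, e i : ℕ) : WithBot ℕ) := by rw [Nat.cast_sum]
    _ = (((∑ i, d i) + ∑ i, t i : ℕ) : WithBot ℕ) := by rw [hsum]
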